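/- arXiv:2011.05562 — 2 statements merged into one kernel-verified Lean document; each statement's English description precedes it below -/
import Mathlib

section
/- Let d₁, d₂ be positive integers, A a d₁×d₁ real symmetric matrix, D a d₂×d₂ real symmetric matrix, and P a d₁×d₂ real matrix, and let J = [[A, P], [Pᵀ, D]]. Assume λmax(A) ≠ λmax(D) and set λ⁺ = max(λmax(A), λmax(D)) and δ⁺ = ‖P‖ · tan(½ · arctan(2‖P‖ / |λmax(A) − λmax(D)|)). Then all eigenvalues of J are real and λ⁺ ≤ λmax(J) ≤ λ⁺ + δ⁺. -/
open Matrix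

/-- Largest eigenvalue of a Hermitian (real symmetric) matrix. -/
noncomputable def lamMax {n : Type*} [Fintype n] [DecidableEq n] {A : Matrix n n ℝ}
    (hA : A.IsHermitian) : ℝ := ⨆ i, hA.eigenvalues i

/-- The ℓ²→ℓ² operator norm of a rectangular real matrix. -/
noncomputable def l2OpNorm {m n : ℕ} (Z : Matrix (Fin m) (Fin n) ℝ) : ℝ :=
  ‖LinearMap.toContinuousLinearMap (Matrix.toEuclideanLin Z)‖

section aux
variable {n : Type*} [Fintype n] [DecidableEq n]

lemma eig_le_lamMax {A : Matrix n n ℝ} (hA : A.IsHermitian) (i : n) :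
    hA.eigenvalues i ≤ lamMax hA :=
  le_ciSup (Set.Finite.bddAbove (Set.finite_range _)) i

lemma exists_lamMax [Nonempty n] {A : Matrix n n ℝ} (hA : A.IsHermitian) :
    ∃ i, lamMax hA = hA.eigenvalues i := by
  obtain ⟨i, hi⟩ := Finite.exists_max hA.eigenvalues
  exact ⟨i, le_antisymm (ciSup_le hi) (eig_le_lamMax hA i)⟩

lemma rayleigh_le {A : Matrix n n ℝ} (hA : A.IsHermitian) (x : n → ℝ) :
    x ⬝ᵥ (A *ᵥ x) ≤ lamMax hA * (x ⬝ᵥ x) := by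
  set c := lamMax hA with hc
  set U : Matrix n n ℝ := (hA.eigenvectorUnitary : Matrix n n ℝ) with hUdef
  have hU : U * star U = 1 := Matrix.mem_unitaryGroup_iff.mp (hA.eigenvectorUnitary).2
  have hspec : A = U * Matrix.diagonal hA.eigenvalues * star U := by
    have := hA.spectral_theorem
    rwa [RCLike.ofReal_real_eq_id, Function.id_comp] at this
  have key : c • (1 : Matrix n n ℝ) - A
      = U * Matrix.diagonal (fun i => c - hA.eigenvalues i) * star U := by
    have hd : Matrix.diagonal (fun i => c - hA.eigenvalues i)
        = c • (1 : Matrix n n ℝ) - Matrix.diagonal hA.eigenvalues := by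
      rw [← Matrix.diagonal_sub, Matrix.smul_one_eq_diagonal]
    rw [hd, mul_sub, sub_mul, Matrix.mul_smul, Matrix.smul_mul, mul_one, hU, ← hspec]
  have hpsd : (c • (1 : Matrix n n ℝ) - A).PosSemidef := by
    rw [key]
    exact (Matrix.posSemidef_diagonal_iff.mpr
      (fun i => sub_nonneg.mpr (eig_le_lamMax hA i))).mul_mul_conjTranspose_same U
  have h2 := Matrix.PosSemidef.dotProduct_mulVec_nonneg hpsd x
  simp only [star_trivial, Matrix.sub_mulVec, Matrix.smul_mulVec, Matrix.one_mulVec,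
    dotProduct_sub, dotProduct_smul, smul_eq_mul] at h2
  linarith

end aux

lemma eigBasis_dot {n : Type*} [Fintype n] [DecidableEq n] {A : Matrix n n ℝ}
    (hA : A.IsHermitian) (i : n) :
    (⇑(hA.eigenvectorBasis i) : n → ℝ) ⬝ᵥ ⇑(hA.eigenvectorBasis i) = 1 := by
  have h := hA.eigenvectorBasis.orthonormal.1 i
  have h2 : (inner ℝ (hA.eigenvectorBasis i) (hA.eigenvectorBasis i) : ℝ) = 1 := by
    rw [real_inner_self_eq_norm_sq, h]; norm_num
  rw [← h2]
  rw [PiLp.inner_apply]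
  simp [RCLike.inner_apply, dotProduct, mul_comm, pow_two]

lemma norm_euclidean {n : ℕ} (u : Fin n → ℝ) :
    ‖(WithLp.equiv 2 (Fin n → ℝ)).symm u‖ = Real.sqrt (u ⬝ᵥ u) := by
  rw [EuclideanSpace.norm_eq]
  congr 1
  simp [dotProduct, Real.norm_eq_abs, sq_abs, pow_two]

lemma dot_mulVec_le {m n : ℕ} (P : Matrix (Fin m) (Fin n) ℝ) (u : Fin m → ℝ) (v : Fin n → ℝ) :
    u ⬝ᵥ (P *ᵥ v) ≤ l2OpNorm P * (Real.sqrt (u ⬝ᵥ u) * Real.sqrt (v ⬝ᵥ v)) := by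
  set u' : EuclideanSpace ℝ (Fin m) := (WithLp.equiv 2 _).symm u with hu'
  set v' : EuclideanSpace ℝ (Fin n) := (WithLp.equiv 2 _).symm v with hv'
  have h1 : u ⬝ᵥ (P *ᵥ v) = (inner ℝ u' (Matrix.toEuclideanLin P v') : ℝ) := by
    rw [hu', hv', toEuclideanLin_apply]
    simp [PiLp.inner_apply, RCLike.inner_apply, dotProduct, mul_comm]
  have h2 : (inner ℝ u' (Matrix.toEuclideanLin P v') : ℝ) ≤ ‖u'‖ * ‖Matrix.toEuclideanLin P v'‖ :=
    real_inner_le_norm _ _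
  have h3 : ‖Matrix.toEuclideanLin P v'‖ ≤ l2OpNorm P * ‖v'‖ :=
    (LinearMap.toContinuousLinearMap (Matrix.toEuclideanLin P)).le_opNorm v'
  have h4 : ‖u'‖ = Real.sqrt (u ⬝ᵥ u) := norm_euclidean u
  have h5 : ‖v'‖ = Real.sqrt (v ⬝ᵥ v) := norm_euclidean v
  have h0 : (0:ℝ) ≤ ‖u'‖ := norm_nonneg _
  calc u ⬝ᵥ (P *ᵥ v) ≤ ‖u'‖ * ‖Matrix.toEuclideanLin P v'‖ := h1 ▸ h2
    _ ≤ ‖u'‖ * (l2OpNorm P * ‖v'‖) := by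
        exact mul_le_mul_of_nonneg_left h3 h0
    _ = l2OpNorm P * (Real.sqrt (u ⬝ᵥ u) * Real.sqrt (v ⬝ᵥ v)) := by rw [h4, h5]; ring

lemma tan_half_arctan (t : ℝ) (ht : 0 ≤ t) :
    Real.tan ((1/2) * Real.arctan t) = t / (Real.sqrt (1 + t^2) + 1) := by
  set θ := Real.arctan t with hθ
  have hθ0 : 0 ≤ θ := by
    rw [hθ, ← Real.arctan_zero]
    exact Real.arctan_strictMono.monotone ht
  have hθ2 : θ < Real.pi / 2 := Real.arctan_lt_pi_div_two t
  have hc2 : 0 < Real.cos (θ/2) := by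
    apply Real.cos_pos_of_mem_Ioo
    constructor
    · linarith [Real.pi_pos]
    · linarith
  have hw : (0:ℝ) < Real.sqrt (1 + t^2) := Real.sqrt_pos.mpr (by positivity)
  set w := Real.sqrt (1 + t^2) with hwdef
  have hsin : Real.sin θ = t / w := Real.sin_arctan t
  have hcos : Real.cos θ = 1 / w := Real.cos_arctan t
  have hsin2 : Real.sin θ = 2 * Real.sin (θ/2) * Real.cos (θ/2) := by
    rw [show θ = 2 * (θ/2) by ring, Real.sin_two_mul]
    ring_nf
  have hcos2 : Real.cos θ = 2 * Real.cos (θ/2)^2 - 1 := by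
    rw [show θ = 2 * (θ/2) by ring, Real.cos_two_mul]
    ring_nf
  have htan : Real.tan ((1/2) * θ) = Real.sin (θ/2) / Real.cos (θ/2) := by
    rw [show (1/2) * θ = θ/2 by ring, Real.tan_eq_sin_div_cos]
  rw [htan]
  have hkey : Real.sin (θ/2) / Real.cos (θ/2) = Real.sin θ / (1 + Real.cos θ) := by
    rw [hsin2, hcos2]
    field_simp
    ring
  rw [hkey, hsin, hcos]
  field_simp

lemma p_tan_eq (p Δ : ℝ) (hp : 0 ≤ p) (hΔ : Δ ≠ 0) :
    p * Real.tan ((1/2) * Real.arctan (2*p/|Δ|)) = Real.sqrt (Δ^2/4 + p^2) - |Δ|/2 := by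
  set q := |Δ| with hq
  have hq0 : 0 < q := abs_pos.mpr hΔ
  set R := Real.sqrt (Δ^2/4 + p^2) with hR
  have hR2 : R^2 = Δ^2/4 + p^2 := Real.sq_sqrt (by positivity)
  have hR0 : 0 ≤ R := Real.sqrt_nonneg _
  have hRq : q/2 ≤ R := by
    rw [hR]
    have : q/2 = Real.sqrt (Δ^2/4) := by
      rw [show Δ^2/4 = (Δ/2)^2 by ring, Real.sqrt_sq_eq_abs, abs_div]
      simp [hq]
    rw [this]
    exact Real.sqrt_le_sqrt (by nlinarith)
  have ht : 0 ≤ 2*p/q := by positivity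
  rw [tan_half_arctan _ ht]
  have hq2 : q^2 = Δ^2 := sq_abs Δ
  have hw : Real.sqrt (1 + (2*p/q)^2) = 2*R/q := by
    have h1 : 1 + (2*p/q)^2 = (2*R/q)^2 := by
      field_simp
      linear_combination -4*hR2 + hq2
    rw [h1, Real.sqrt_sq (by positivity)]
  rw [hw]
  have h2Rq : 0 < 2*R/q + 1 := by positivity
  field_simp
  linear_combination -4*hR2 + hq2

lemma quad_bound (a d p s t : ℝ) (hp : 0 ≤ p) (h1 : s^2 + t^2 = 1) (hne : a ≠ d) :
    a*s^2 + 2*p*(s*t) + d*t^2 ≤ max a d + p * Real.tan ((1/2) * Real.arctan (2*p/|a - d|)) := by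
  set R := Real.sqrt ((a-d)^2/4 + p^2) with hR
  have hR2 : R^2 = (a-d)^2/4 + p^2 := Real.sq_sqrt (by positivity)
  have hR0 : 0 ≤ R := Real.sqrt_nonneg _
  have hmax : max a d = (a+d)/2 + |a-d|/2 := by
    rcases le_total a d with h | h
    · rw [max_eq_right h, abs_of_nonpos (by linarith)]; ring
    · rw [max_eq_left h, abs_of_nonneg (by linarith)]; ring
  have hΔ : a - d ≠ 0 := sub_ne_zero.mpr hne
  have hid : p * Real.tan ((1/2) * Real.arctan (2*p/|a - d|)) = R - |a-d|/2 :=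
    p_tan_eq p (a-d) hp hΔ
  rw [hid, hmax]
  have hkey : ((a-d)/2*(s^2-t^2) + p*(2*s*t))^2 + ((a-d)/2*(2*s*t) - p*(s^2-t^2))^2
      = ((a-d)^2/4 + p^2) * (s^2+t^2)^2 := by ring
  rw [h1] at hkey
  have hE2 : ((a-d)/2*(s^2-t^2) + p*(2*s*t))^2 ≤ R^2 := by
    nlinarith [sq_nonneg ((a-d)/2*(2*s*t) - p*(s^2-t^2))]
  have hE : (a-d)/2*(s^2-t^2) + p*(2*s*t) ≤ R := by nlinarith [hE2, hR0]
  have hsplit : a*s^2 + 2*p*(s*t) + d*t^2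
      = (a+d)/2 + ((a-d)/2*(s^2-t^2) + p*(2*s*t)) := by
    linear_combination ((a+d)/2) * h1
  rw [hsplit]
  linarith [hE]

lemma dot_self_nonneg {n : Type*} [Fintype n] (u : n → ℝ) : 0 ≤ u ⬝ᵥ u :=
  Finset.sum_nonneg fun i _ => mul_self_nonneg (u i)

theorem stmt6 {d₁ d₂ : ℕ} (hd₁ : 0 < d₁) (hd₂ : 0 < d₂)
    (A : Matrix (Fin d₁) (Fin d₁) ℝ) (D : Matrix (Fin d₂) (Fin d₂) ℝ)
    (P : Matrix (Fin d₁) (Fin d₂) ℝ)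
    (hA : A.IsHermitian) (hD : D.IsHermitian)
    (hJ : (Matrix.fromBlocks A P Pᵀ D).IsHermitian)
    (hne : lamMax hA ≠ lamMax hD) :
    (∀ μ ∈ spectrum ℂ ((Matrix.fromBlocks A P Pᵀ D).map (algebraMap ℝ ℂ)), μ.im = 0) ∧
    max (lamMax hA) (lamMax hD) ≤ lamMax hJ ∧
    lamMax hJ ≤ max (lamMax hA) (lamMax hD) +
        l2OpNorm P * Real.tan
          ((1 / 2) * Real.arctan (2 * l2OpNorm P / |lamMax hA - lamMax hD|)) := by
  have hne1 : Nonempty (Fin d₁) := Fin.pos_iff_nonempty.mp hd₁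
  have hne2 : Nonempty (Fin d₂) := Fin.pos_iff_nonempty.mp hd₂
  refine ⟨?_, ?_, ?_⟩
  · -- real spectrum
    intro μ hμ
    have hJC : ((Matrix.fromBlocks A P Pᵀ D).map (algebraMap ℝ ℂ)).IsHermitian :=
      hJ.map _ (fun x => by simp [Complex.conj_ofReal])
    rw [hJC.spectral_theorem, Unitary.conjStarAlgAut_apply, Unitary.spectrum_star_right_conjugate,
      spectrum_diagonal] at hμ
    obtain ⟨i, hi⟩ := hμ
    rw [← hi]
    simp
  · -- lower bound
    rw [max_le_iff]
    constructor
    · obtain ⟨i, hi⟩ := exists_lamMax hA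
      have hu1 : (⇑(hA.eigenvectorBasis i) : Fin d₁ → ℝ) ⬝ᵥ ⇑(hA.eigenvectorBasis i) = 1 :=
        eigBasis_dot hA i
      have hAu : A *ᵥ ⇑(hA.eigenvectorBasis i) = hA.eigenvalues i • ⇑(hA.eigenvectorBasis i) :=
        hA.mulVec_eigenvectorBasis i
      have h := rayleigh_le hJ (Sum.elim (⇑(hA.eigenvectorBasis i)) 0)
      rw [Matrix.fromBlocks_mulVec] at h
      simp only [Sum.elim_comp_inl, Sum.elim_comp_inr, Matrix.mulVec_zero, add_zero,
        sumElim_dotProduct_sumElim, zero_dotProduct, hAu,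
        dotProduct_smul, smul_eq_mul, hu1, mul_one] at h
      rw [hi]
      linarith
    · obtain ⟨i, hi⟩ := exists_lamMax hD
      have hu1 : (⇑(hD.eigenvectorBasis i) : Fin d₂ → ℝ) ⬝ᵥ ⇑(hD.eigenvectorBasis i) = 1 :=
        eigBasis_dot hD i
      have hDu : D *ᵥ ⇑(hD.eigenvectorBasis i) = hD.eigenvalues i • ⇑(hD.eigenvectorBasis i) :=
        hD.mulVec_eigenvectorBasis i
      have h := rayleigh_le hJ (Sum.elim 0 (⇑(hD.eigenvectorBasis i)))
      rw [Matrix.fromBlocks_mulVec] at h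
      simp only [Sum.elim_comp_inl, Sum.elim_comp_inr, Matrix.mulVec_zero, zero_add,
        sumElim_dotProduct_sumElim, zero_dotProduct, hDu,
        dotProduct_smul, smul_eq_mul, hu1, mul_one, zero_add, add_zero] at h
      rw [hi]
      linarith
  · -- upper bound
    obtain ⟨i, hi⟩ := exists_lamMax hJ
    set x := (⇑(hJ.eigenvectorBasis i) : (Fin d₁ ⊕ Fin d₂) → ℝ) with hxdef
    have hx1 : x ⬝ᵥ x = 1 := eigBasis_dot hJ i
    have hJx : (Matrix.fromBlocks A P Pᵀ D) *ᵥ x = hJ.eigenvalues i • x :=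
      hJ.mulVec_eigenvectorBasis i
    set u := fun j => x (Sum.inl j) with hudef
    set v := fun j => x (Sum.inr j) with hvdef
    have hxe : x = Sum.elim u v := by funext j; cases j <;> rfl
    have htr : v ⬝ᵥ (Pᵀ *ᵥ u) = u ⬝ᵥ (P *ᵥ v) := by
      rw [Matrix.mulVec_transpose, dotProduct_comm, Matrix.dotProduct_mulVec]
    have hquad : hJ.eigenvalues i
        = u ⬝ᵥ (A *ᵥ u) + 2 * (u ⬝ᵥ (P *ᵥ v)) + v ⬝ᵥ (D *ᵥ v) := by
      have h0 : x ⬝ᵥ ((Matrix.fromBlocks A P Pᵀ D) *ᵥ x) = hJ.eigenvalues i := by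
        rw [hJx, dotProduct_smul, smul_eq_mul, hx1, mul_one]
      rw [hxe] at h0
      rw [Matrix.fromBlocks_mulVec, sumElim_dotProduct_sumElim] at h0
      simp only [Sum.elim_comp_inl, Sum.elim_comp_inr, dotProduct_add] at h0
      rw [htr] at h0
      linarith
    have hsum : u ⬝ᵥ u + v ⬝ᵥ v = 1 := by
      rw [hxe, sumElim_dotProduct_sumElim] at hx1
      exact hx1
    set s := Real.sqrt (u ⬝ᵥ u) with hs
    set t := Real.sqrt (v ⬝ᵥ v) with ht
    have hs2 : s^2 = u ⬝ᵥ u := Real.sq_sqrt (dot_self_nonneg u)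
    have ht2 : t^2 = v ⬝ᵥ v := Real.sq_sqrt (dot_self_nonneg v)
    have hst1 : s^2 + t^2 = 1 := by rw [hs2, ht2]; exact hsum
    have hp : (0:ℝ) ≤ l2OpNorm P := norm_nonneg _
    have hbA : u ⬝ᵥ (A *ᵥ u) ≤ lamMax hA * s^2 := by rw [hs2]; exact rayleigh_le hA u
    have hbD : v ⬝ᵥ (D *ᵥ v) ≤ lamMax hD * t^2 := by rw [ht2]; exact rayleigh_le hD v
    have hbP : u ⬝ᵥ (P *ᵥ v) ≤ l2OpNorm P * (s * t) := dot_mulVec_le P u v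
    have hq := quad_bound (lamMax hA) (lamMax hD) (l2OpNorm P) s t hp hst1 hne
    rw [hi, hquad]
    have : u ⬝ᵥ (A *ᵥ u) + 2 * (u ⬝ᵥ (P *ᵥ v)) + v ⬝ᵥ (D *ᵥ v)
        ≤ lamMax hA * s^2 + 2 * (l2OpNorm P) * (s*t) + lamMax hD * t^2 := by linarith
    calc u ⬝ᵥ (A *ᵥ u) + 2 * (u ⬝ᵥ (P *ᵥ v)) + v ⬝ᵥ (D *ᵥ v)
        ≤ lamMax hA * s^2 + 2 * (l2OpNorm P) * (s*t) + lamMax hD * t^2 := this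
      _ ≤ _ := hq
end

section
/- Let d₁, d₂ be positive integers, A a d₁×d₁ real symmetric negative definite matrix, D a d₂×d₂ real symmetric negative definite matrix, and P a d₁×d₂ real matrix. Suppose λmin(−A) · λmin(−D) > ‖P‖², where λmin(−A) and λmin(−D) are the smallest eigenvalues of the positive definite matrices −A and −D, and ‖P‖ is the ℓ²→ℓ² operator norm of P (so ‖P‖² = λmax(PᵀP)). Then for every real τ > 0, the block matrix [[A, P], [τ·Pᵀ, τ·D]] is Hurwitz: every eigenvalue has strictly negative real part. -/
open Matrix
open scoped ComplexOrder

/-- Smallest eigenvalue of a Hermitian (real symmetric) matrix. -/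
noncomputable def lamMin {n : Type*} [Fintype n] [DecidableEq n] {A : Matrix n n ℝ}
    (hA : A.IsHermitian) : ℝ := ⨅ i, hA.eigenvalues i

lemma aux_psd_map {n : Type*} [Fintype n] [DecidableEq n] {M : Matrix n n ℝ}
    (h : M.PosSemidef) : (M.map (algebraMap ℝ ℂ)).PosSemidef := by
  obtain ⟨B, rfl⟩ : ∃ B : Matrix n n ℝ, M = Bᴴ * B := by
    open scoped MatrixOrder in
    obtain ⟨B, hB⟩ := CStarAlgebra.nonneg_iff_eq_star_mul_self.mp h.nonneg
    exact ⟨B, hB⟩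
  have : (Bᴴ * B).map (algebraMap ℝ ℂ) =
      (B.map (algebraMap ℝ ℂ))ᴴ * (B.map (algebraMap ℝ ℂ)) := by
    rw [Matrix.map_mul, Matrix.conjTranspose_map]
    intro x
    simp [Complex.ext_iff]
  rw [this]
  exact Matrix.posSemidef_conjTranspose_mul_self _

lemma lamMin_le {n : Type*} [Fintype n] [DecidableEq n] [Nonempty n] {B : Matrix n n ℝ}
    (hB : B.IsHermitian) (i : n) : lamMin hB ≤ hB.eigenvalues i :=
  ciInf_le (Set.Finite.bddBelow (Set.finite_range _)) i

lemma lamMin_pos {n : Type*} [Fintype n] [DecidableEq n] [Nonempty n] {B : Matrix n n ℝ}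
    (hB : B.PosDef) : 0 < lamMin hB.isHermitian := by
  obtain ⟨i, hi⟩ := exists_eq_ciInf_of_finite (f := hB.isHermitian.eigenvalues)
  rw [lamMin, ← hi]
  exact hB.eigenvalues_pos i

lemma aux_sub_smul_psd {n : Type*} [Fintype n] [DecidableEq n] {B : Matrix n n ℝ}
    (hB : B.IsHermitian) {c : ℝ} (hc : ∀ i, c ≤ hB.eigenvalues i) :
    (B - c • 1).PosSemidef := by
  have key : B - c • (1 : Matrix n n ℝ) =
      (hB.eigenvectorUnitary : Matrix n n ℝ) * diagonal (fun i => hB.eigenvalues i - c) *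
        (star (hB.eigenvectorUnitary : Matrix n n ℝ)) := by
    have hd : diagonal (fun i => hB.eigenvalues i - c) =
        diagonal (RCLike.ofReal ∘ hB.eigenvalues) - c • (1 : Matrix n n ℝ) := by
      rw [Matrix.smul_one_eq_diagonal, ← Matrix.diagonal_sub]
      rfl
    rw [hd, Matrix.mul_sub, Matrix.sub_mul]
    have hU : (hB.eigenvectorUnitary : Matrix n n ℝ) *
        (star (hB.eigenvectorUnitary : Matrix n n ℝ)) = 1 :=
      (Matrix.mem_unitaryGroup_iff).mp (hB.eigenvectorUnitary).2
    rw [Matrix.mul_smul, Matrix.smul_mul, mul_one, hU]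
    conv_lhs => rw [hB.spectral_theorem, Unitary.conjStarAlgAut_apply]
  rw [key]
  exact (Matrix.posSemidef_diagonal_iff.mpr fun i => sub_nonneg.mpr (hc i)).mul_mul_conjTranspose_same _

lemma l2OpNorm_nonneg {m n : ℕ} (Z : Matrix (Fin m) (Fin n) ℝ) : 0 ≤ l2OpNorm Z :=
  norm_nonneg _

lemma aux_psd_re {n : Type*} [Fintype n] [DecidableEq n] {M : Matrix n n ℝ}
    (h : M.PosSemidef) (x : n → ℂ) :
    0 ≤ (star x ⬝ᵥ (M.map (algebraMap ℝ ℂ)) *ᵥ x).re :=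
  (Complex.le_def.mp ((aux_psd_map h).dotProduct_mulVec_nonneg x)).1

lemma aux_map_sub_smul {n : Type*} [Fintype n] [DecidableEq n] (M : Matrix n n ℝ) (c : ℝ) :
    (M - c • 1).map (algebraMap ℝ ℂ) = M.map (algebraMap ℝ ℂ) - (c : ℂ) • 1 := by
  ext i j
  by_cases h : i = j <;>
    simp [Matrix.map_apply, Matrix.sub_apply, Matrix.smul_apply, Matrix.one_apply, h]

lemma aux_smul_sub_map {n : Type*} [Fintype n] [DecidableEq n] (M : Matrix n n ℝ) (c : ℝ) :
    (c • 1 - M).map (algebraMap ℝ ℂ) = (c : ℂ) • 1 - M.map (algebraMap ℝ ℂ) := by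
  ext i j
  by_cases h : i = j <;>
    simp [Matrix.map_apply, Matrix.sub_apply, Matrix.smul_apply, Matrix.one_apply, h]

lemma aux_rayleigh {n : Type*} [Fintype n] [DecidableEq n] [Nonempty n] {B : Matrix n n ℝ}
    (hB : B.IsHermitian) (x : n → ℂ) :
    lamMin hB * (star x ⬝ᵥ x).re ≤ (star x ⬝ᵥ (B.map (algebraMap ℝ ℂ)) *ᵥ x).re := by
  have h := aux_psd_re (aux_sub_smul_psd hB (lamMin_le hB)) x
  rw [aux_map_sub_smul, Matrix.sub_mulVec, dotProduct_sub, Matrix.smul_mulVec,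
    Matrix.one_mulVec, dotProduct_smul] at h
  have h2 : ((lamMin hB : ℂ) • (star x ⬝ᵥ x)).re = lamMin hB * (star x ⬝ᵥ x).re := by
    simp [Complex.smul_re]
  rw [Complex.sub_re, h2] at h
  linarith

lemma aux_opnorm_psd {d₁ d₂ : ℕ} (P : Matrix (Fin d₁) (Fin d₂) ℝ) :
    ((l2OpNorm P ^ 2) • (1 : Matrix (Fin d₂) (Fin d₂) ℝ) - Pᵀ * P).PosSemidef := by
  rw [Matrix.posSemidef_iff_dotProduct_mulVec]
  constructor
  · simp [Matrix.IsHermitian, Matrix.conjTranspose_sub, Matrix.conjTranspose_smul,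
      Matrix.conjTranspose_mul]
  · intro v
    set V : EuclideanSpace ℝ (Fin d₂) := (WithLp.equiv 2 _).symm v with hV
    set W : EuclideanSpace ℝ (Fin d₁) := (WithLp.equiv 2 _).symm (P *ᵥ v) with hW
    have h1 : ‖W‖ ≤ l2OpNorm P * ‖V‖ := by
      have := (LinearMap.toContinuousLinearMap (Matrix.toEuclideanLin P)).le_opNorm V
      simpa [Matrix.toEuclideanLin_apply, hV, hW, l2OpNorm] using this
    have hv : ‖V‖ ^ 2 = v ⬝ᵥ v := by
      have := (real_inner_self_eq_norm_sq V).symm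
      rw [EuclideanSpace.inner_eq_star_dotProduct] at this
      simpa [hV] using this
    have hw : ‖W‖ ^ 2 = (P *ᵥ v) ⬝ᵥ (P *ᵥ v) := by
      have := (real_inner_self_eq_norm_sq W).symm
      rw [EuclideanSpace.inner_eq_star_dotProduct] at this
      simpa [hW] using this
    have hvPP : v ⬝ᵥ (Pᵀ * P) *ᵥ v = (P *ᵥ v) ⬝ᵥ (P *ᵥ v) := by
      rw [← Matrix.mulVec_mulVec, Matrix.dotProduct_mulVec, Matrix.vecMul_transpose]
    have hk : 0 ≤ l2OpNorm P := l2OpNorm_nonneg P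
    have hsq : ‖W‖ ^ 2 ≤ (l2OpNorm P * ‖V‖) ^ 2 := by
      have := norm_nonneg W
      nlinarith
    simp only [star_trivial, Matrix.sub_mulVec, dotProduct_sub,
      Matrix.smul_mulVec, Matrix.one_mulVec, dotProduct_smul, smul_eq_mul]
    rw [hvPP, ← hv, ← hw]
    nlinarith

lemma aux_dot_self_re_nonneg {n : Type*} [Fintype n] (x : n → ℂ) :
    0 ≤ (star x ⬝ᵥ x).re := by
  simp only [dotProduct, Pi.star_apply, Complex.re_sum]
  apply Finset.sum_nonneg
  intro i _
  simp [← Complex.normSq_eq_conj_mul_self, Complex.normSq_nonneg]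

lemma aux_norm_sq {n : Type*} [Fintype n] (x : n → ℂ) :
    ‖(WithLp.equiv 2 (n → ℂ)).symm x‖ ^ 2 = (star x ⬝ᵥ x).re := by
  set X : EuclideanSpace ℂ n := (WithLp.equiv 2 (n → ℂ)).symm x with hX
  have h := inner_self_eq_norm_sq (𝕜 := ℂ) X
  rw [EuclideanSpace.inner_eq_star_dotProduct, dotProduct_comm] at h
  simpa [hX] using h.symm

lemma aux_cs_bound {d₁ d₂ : ℕ} (P : Matrix (Fin d₁) (Fin d₂) ℝ)
    (x : Fin d₁ → ℂ) (y : Fin d₂ → ℂ) :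
    ‖star x ⬝ᵥ (P.map (algebraMap ℝ ℂ)) *ᵥ y‖ ≤
      l2OpNorm P * (Real.sqrt (star x ⬝ᵥ x).re * Real.sqrt (star y ⬝ᵥ y).re) := by
  set Pc := P.map (algebraMap ℝ ℂ) with hPc
  set w := Pc *ᵥ y with hw
  set X : EuclideanSpace ℂ (Fin d₁) := (WithLp.equiv 2 _).symm x with hX
  set W : EuclideanSpace ℂ (Fin d₁) := (WithLp.equiv 2 _).symm w with hW
  have hk : 0 ≤ l2OpNorm P := l2OpNorm_nonneg P
  -- star w ⬝ᵥ w = star y ⬝ᵥ ((Pᵀ*P).map _) *ᵥ y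
  have hPct : Pcᴴ = (Pᵀ).map (algebraMap ℝ ℂ) := by
    ext i j
    simp [hPc, Matrix.conjTranspose_apply, Matrix.map_apply, Complex.ext_iff]
  have hww : star w ⬝ᵥ w = star y ⬝ᵥ ((Pᵀ * P).map (algebraMap ℝ ℂ)) *ᵥ y := by
    rw [hw, Matrix.star_mulVec, ← Matrix.dotProduct_mulVec, Matrix.mulVec_mulVec,
      hPct, ← Matrix.map_mul]
  -- bound on ‖W‖
  have hpsd := aux_psd_re (aux_opnorm_psd P) y
  rw [aux_smul_sub_map, Matrix.sub_mulVec, dotProduct_sub, Matrix.smul_mulVec,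
    Matrix.one_mulVec, dotProduct_smul, Complex.sub_re] at hpsd
  rw [smul_eq_mul] at hpsd
  have h2 : ((↑(l2OpNorm P ^ 2) : ℂ) * (star y ⬝ᵥ y)).re
      = l2OpNorm P ^ 2 * (star y ⬝ᵥ y).re := by
    rw [Complex.re_ofReal_mul]
  rw [h2] at hpsd
  have hWy : ‖W‖ ^ 2 ≤ l2OpNorm P ^ 2 * (star y ⬝ᵥ y).re := by
    rw [aux_norm_sq w, hww]; linarith
  have hWle : ‖W‖ ≤ l2OpNorm P * Real.sqrt (star y ⬝ᵥ y).re := by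
    have h3 : ‖W‖ = Real.sqrt (‖W‖ ^ 2) := (Real.sqrt_sq (norm_nonneg W)).symm
    rw [h3]
    calc Real.sqrt (‖W‖ ^ 2) ≤ Real.sqrt (l2OpNorm P ^ 2 * (star y ⬝ᵥ y).re) :=
          Real.sqrt_le_sqrt hWy
      _ = l2OpNorm P * Real.sqrt (star y ⬝ᵥ y).re := by
          rw [Real.sqrt_mul (by positivity), Real.sqrt_sq hk]
  have hXn : ‖X‖ = Real.sqrt (star x ⬝ᵥ x).re := by
    rw [← aux_norm_sq x, Real.sqrt_sq (norm_nonneg _)]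
  have hcs : ‖(inner ℂ X W : ℂ)‖ ≤ ‖X‖ * ‖W‖ := norm_inner_le_norm X W
  have hinner : (inner ℂ X W : ℂ) = star x ⬝ᵥ w := by
    rw [EuclideanSpace.inner_eq_star_dotProduct, dotProduct_comm]; simp [hX, hW]
  rw [hinner] at hcs
  calc ‖star x ⬝ᵥ w‖ = ‖star x ⬝ᵥ w‖ := rfl
    _ ≤ ‖X‖ * ‖W‖ := hcs
    _ ≤ Real.sqrt (star x ⬝ᵥ x).re * (l2OpNorm P * Real.sqrt (star y ⬝ᵥ y).re) := by
        rw [hXn]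
        exact mul_le_mul_of_nonneg_left hWle (Real.sqrt_nonneg _)
    _ = l2OpNorm P * (Real.sqrt (star x ⬝ᵥ x).re * Real.sqrt (star y ⬝ᵥ y).re) := by ring

lemma aux_dot_self_im {n : Type*} [Fintype n] (x : n → ℂ) :
    (star x ⬝ᵥ x).im = 0 := by
  simp only [dotProduct, Pi.star_apply, Complex.im_sum]
  apply Finset.sum_eq_zero
  intro i _
  simp [← Complex.normSq_eq_conj_mul_self]

lemma aux_dot_self_pos {n : Type*} [Fintype n] {x : n → ℂ} (hx : x ≠ 0) :
    0 < (star x ⬝ᵥ x).re := by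
  rw [← aux_norm_sq]
  have hX : (WithLp.equiv 2 (n → ℂ)).symm x ≠ 0 := by
    intro h
    apply hx
    have := congrArg (WithLp.equiv 2 (n → ℂ)) h
    simpa using this
  exact pow_pos (norm_pos_iff.mpr hX) 2

lemma aux_map_smul {m n : Type*} (M : Matrix m n ℝ) (t : ℝ) :
    (t • M).map (algebraMap ℝ ℂ) = (t : ℂ) • (M.map (algebraMap ℝ ℂ)) := by
  ext i j
  simp [Matrix.map_apply, Matrix.smul_apply]

set_option maxHeartbeats 1000000 in
theorem stmt10 {d₁ d₂ : ℕ} (hd₁ : 0 < d₁) (hd₂ : 0 < d₂)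
    (A : Matrix (Fin d₁) (Fin d₁) ℝ) (D : Matrix (Fin d₂) (Fin d₂) ℝ)
    (P : Matrix (Fin d₁) (Fin d₂) ℝ)
    (hA : (-A).PosDef) (hD : (-D).PosDef)
    (hP : l2OpNorm P ^ 2 < lamMin hA.isHermitian * lamMin hD.isHermitian)
    (τ : ℝ) (hτ : 0 < τ) :
    ∀ μ ∈ spectrum ℂ ((Matrix.fromBlocks A P (τ • Pᵀ) (τ • D)).map (algebraMap ℝ ℂ)),
      μ.re < 0 := by
  intro μ hμ
  haveI : Nonempty (Fin d₁) := Fin.pos_iff_nonempty.mp hd₁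
  haveI : Nonempty (Fin d₂) := Fin.pos_iff_nonempty.mp hd₂
  set k := l2OpNorm P with hk
  set a := lamMin hA.isHermitian with ha
  set d := lamMin hD.isHermitian with hd
  have ha0 : 0 < a := lamMin_pos hA
  have hd0 : 0 < d := lamMin_pos hD
  have hk0 : 0 ≤ k := l2OpNorm_nonneg P
  set Mc := ((Matrix.fromBlocks A P (τ • Pᵀ) (τ • D)).map (algebraMap ℝ ℂ)) with hMc
  -- obtain an eigenvector
  have hμ' : μ ∈ spectrum ℂ (Matrix.toLinAlgEquiv' Mc) := by
    rwa [AlgEquiv.spectrum_eq]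
  have hev : Module.End.HasEigenvalue (Matrix.toLinAlgEquiv' Mc) μ :=
    Module.End.hasEigenvalue_iff_mem_spectrum.mpr hμ'
  obtain ⟨v, hv⟩ := hev.exists_hasEigenvector
  have hv0 : v ≠ 0 := hv.right
  have hMv : Mc *ᵥ v = μ • v := by
    have := hv.apply_eq_smul
    rwa [Matrix.toLinAlgEquiv'_apply] at this
  set x : Fin d₁ → ℂ := v ∘ Sum.inl with hx
  set y : Fin d₂ → ℂ := v ∘ Sum.inr with hy
  -- block structure
  have hblock : Mc = Matrix.fromBlocks (A.map (algebraMap ℝ ℂ)) (P.map (algebraMap ℝ ℂ))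
      ((τ : ℂ) • ((Pᵀ).map (algebraMap ℝ ℂ))) ((τ : ℂ) • (D.map (algebraMap ℝ ℂ))) := by
    rw [hMc, Matrix.fromBlocks_map, aux_map_smul, aux_map_smul]
  rw [hblock, Matrix.fromBlocks_mulVec] at hMv
  have h1 : A.map (algebraMap ℝ ℂ) *ᵥ x + P.map (algebraMap ℝ ℂ) *ᵥ y = μ • x := by
    funext i
    have := congrFun hMv (Sum.inl i)
    simpa [hx] using this
  have h2 : ((τ : ℂ) • ((Pᵀ).map (algebraMap ℝ ℂ))) *ᵥ x
      + ((τ : ℂ) • (D.map (algebraMap ℝ ℂ))) *ᵥ y = μ • y := by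
    funext i
    have := congrFun hMv (Sum.inr i)
    simpa [hy] using this
  -- dot products
  set α := star x ⬝ᵥ (A.map (algebraMap ℝ ℂ) *ᵥ x) with hα
  set p := star x ⬝ᵥ (P.map (algebraMap ℝ ℂ) *ᵥ y) with hp'
  set q := star y ⬝ᵥ ((Pᵀ).map (algebraMap ℝ ℂ) *ᵥ x) with hq'
  set δ := star y ⬝ᵥ (D.map (algebraMap ℝ ℂ) *ᵥ y) with hδ
  set nx := (star x ⬝ᵥ x).re with hnx
  set ny := (star y ⬝ᵥ y).re with hny
  have hnx0 : 0 ≤ nx := aux_dot_self_re_nonneg x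
  have hny0 : 0 ≤ ny := aux_dot_self_re_nonneg y
  have eq1 : α + p = μ * (star x ⬝ᵥ x) := by
    have := congrArg (fun w => star x ⬝ᵥ w) h1
    simp only [dotProduct_add, dotProduct_smul, smul_eq_mul] at this
    exact this
  have eq2 : (τ : ℂ) * (q + δ) = μ * (star y ⬝ᵥ y) := by
    have := congrArg (fun w => star y ⬝ᵥ w) h2
    simp only [dotProduct_add, Matrix.smul_mulVec, dotProduct_smul,
      smul_eq_mul] at this
    rw [mul_add]
    exact this
  -- real parts
  have hre1 : α.re + p.re = μ.re * nx := by
    have := congrArg Complex.re eq1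
    rwa [Complex.add_re, Complex.mul_re, aux_dot_self_im, mul_zero, sub_zero] at this
  have hre2 : τ * (q.re + δ.re) = μ.re * ny := by
    have := congrArg Complex.re eq2
    rwa [Complex.re_ofReal_mul, Complex.add_re, Complex.mul_re, aux_dot_self_im,
      mul_zero, sub_zero] at this
  -- q.re = p.re
  have hqp : q.re = p.re := by
    have hPt : ((Pᵀ).map (algebraMap ℝ ℂ))ᴴ = P.map (algebraMap ℝ ℂ) := by
      ext i j
      simp [Matrix.conjTranspose_apply, Matrix.map_apply, Complex.ext_iff]
    have hstar : star q = p := by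
      rw [hq', hp', Matrix.star_dotProduct, star_star, Matrix.star_mulVec, hPt,
        ← Matrix.dotProduct_mulVec]
    have := congrArg Complex.re hstar
    simpa using this
  -- bounds
  have hαb : a * nx ≤ -α.re := by
    have h := aux_rayleigh hA.isHermitian x
    have hneg : (-A).map (algebraMap ℝ ℂ) = -(A.map (algebraMap ℝ ℂ)) := by
      ext i j; simp [Matrix.map_apply]
    rw [hneg, Matrix.neg_mulVec, dotProduct_neg, Complex.neg_re] at h
    exact h
  have hδb : d * ny ≤ -δ.re := by
    have h := aux_rayleigh hD.isHermitian y
    have hneg : (-D).map (algebraMap ℝ ℂ) = -(D.map (algebraMap ℝ ℂ)) := by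
      ext i j; simp [Matrix.map_apply]
    rw [hneg, Matrix.neg_mulVec, dotProduct_neg, Complex.neg_re] at h
    exact h
  have hpb : p.re ≤ k * (Real.sqrt nx * Real.sqrt ny) := by
    calc p.re ≤ ‖p‖ := Complex.re_le_norm p
      _ ≤ k * (Real.sqrt nx * Real.sqrt ny) := aux_cs_bound P x y
  -- positivity of nx + ny
  have hvpos : 0 < nx ∨ 0 < ny := by
    by_contra hcon
    push_neg at hcon
    have hnxe : nx = 0 := le_antisymm hcon.1 hnx0
    have hnye : ny = 0 := le_antisymm hcon.2 hny0
    apply hv0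
    have hx0 : x = 0 := by
      by_contra hxne
      exact absurd hnxe (ne_of_gt (aux_dot_self_pos hxne))
    have hy0 : y = 0 := by
      by_contra hyne
      exact absurd hnye (ne_of_gt (aux_dot_self_pos hyne))
    funext i
    cases i with
    | inl i => exact congrFun hx0 i
    | inr i => exact congrFun hy0 i
  -- key strict inequality
  have hkey : α.re + δ.re + 2 * p.re < 0 := by
    have hsx := Real.sq_sqrt hnx0
    have hsy := Real.sq_sqrt hny0
    have hsx0 := Real.sqrt_nonneg nx
    have hsy0 := Real.sqrt_nonneg ny
    rcases eq_or_lt_of_le hnx0 with hnxz | hnxpos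
    · have hnypos : 0 < ny := by
        rcases hvpos with h | h
        · rw [← hnxz] at h; exact absurd h (lt_irrefl 0)
        · exact h
      have hz : Real.sqrt nx = 0 := by rw [← hnxz, Real.sqrt_zero]
      rw [hz, zero_mul, mul_zero] at hpb
      have e1 : a * nx = 0 := by rw [← hnxz, mul_zero]
      have e2 : 0 < d * ny := mul_pos hd0 hnypos
      linarith
    · rcases eq_or_lt_of_le hny0 with hnyz | hnypos
      · have hz : Real.sqrt ny = 0 := by rw [← hnyz, Real.sqrt_zero]
        rw [hz, mul_zero, mul_zero] at hpb
        have e1 : d * ny = 0 := by rw [← hnyz, mul_zero]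
        have e2 : 0 < a * nx := mul_pos ha0 hnxpos
        linarith
      · have hkad : k < Real.sqrt (a * d) := by
          rw [Real.lt_sqrt hk0]
          exact hP
        have hsad : Real.sqrt (a * d) = Real.sqrt a * Real.sqrt d :=
          Real.sqrt_mul ha0.le d
        have hsa := Real.sq_sqrt ha0.le
        have hsd := Real.sq_sqrt hd0.le
        have hsxpos : 0 < Real.sqrt nx := Real.sqrt_pos.mpr hnxpos
        have hsypos : 0 < Real.sqrt ny := Real.sqrt_pos.mpr hnypos
        have hAM : 2 * (Real.sqrt a * Real.sqrt d) * (Real.sqrt nx * Real.sqrt ny)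
            ≤ a * nx + d * ny := by
          nlinarith [sq_nonneg (Real.sqrt a * Real.sqrt nx - Real.sqrt d * Real.sqrt ny)]
        have hstrict : 2 * k * (Real.sqrt nx * Real.sqrt ny)
            < 2 * (Real.sqrt a * Real.sqrt d) * (Real.sqrt nx * Real.sqrt ny) := by
          rw [← hsad]
          have hprod := mul_pos hsxpos hsypos
          nlinarith
        linarith
  -- conclude
  have hsum : 0 < nx + ny / τ := by
    rcases hvpos with h | h
    · have : 0 ≤ ny / τ := div_nonneg hny0 hτ.le
      linarith
    · have : 0 < ny / τ := div_pos h hτ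
      linarith
  have hfin : μ.re * (nx + ny / τ) < 0 := by
    have hq2 : q.re + δ.re = μ.re * ny / τ := by
      field_simp
      linarith
    have hexp : μ.re * (nx + ny / τ) = μ.re * nx + μ.re * ny / τ := by ring
    rw [hexp, ← hre1, ← hq2, hqp]
    linarith
  by_contra hcon
  push_neg at hcon
  nlinarith [mul_nonneg hcon hsum.le]
end
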